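/- Stratification of asymptotic profiles: under the hypotheses of the m-th order asymptotic expansion theorem, for every t > 0 and every k ∈ {0,…,m}, A_k(t) − A_{k−1}(t) = t^{−k/2} δ_t( A_k(1) − A_{k−1}(1) ) (with A_{−1} ≡ 0), and A_k(1) − A_{k−1}(1) = 2^{−k} Σ_{|α|=k} ( M_α(u₀) + Σ_{β+2γ=α, |γ|≤k/2} ((−ν)^{|γ|}/γ!) M_β(ψ_{|γ|}) ) h_{ν,α} G_ν. -/

import Mathlib

open MeasureTheory Real Filter
open scoped ENNReal Topology BigOperators

noncomputable section

abbrev Eu (n : ℕ) := EuclideanSpace ℝ (Fin n)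

/-- complex Gaussian `G_{tν}` -/
def Gf (n : ℕ) (ν : ℂ) (t : ℝ) (x : Eu n) : ℂ :=
  ((4 * Real.pi * t : ℝ) * ν) ^ (-(n:ℂ)/2) * Complex.exp (-((‖x‖^2 : ℝ) : ℂ) / (4 * t * ν))

/-- parabolic dilation -/
def dil {n : ℕ} (t : ℝ) (φ : Eu n → ℂ) : Eu n → ℂ :=
  fun x => ((t ^ (-(n:ℝ)/2) : ℝ) : ℂ) * φ ((t ^ (-(1:ℝ)/2) : ℝ) • x)

/-- convolution -/
def conv {n : ℕ} (f g : Eu n → ℂ) : Eu n → ℂ := fun x => ∫ y, f (x - y) * g y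

/-- CGL semigroup -/
def cgl (n : ℕ) (ν : ℂ) (t : ℝ) (φ : Eu n → ℂ) : Eu n → ℂ := conv (Gf n ν t) φ

/-- partial derivative -/
def pd {n : ℕ} (j : Fin n) (f : Eu n → ℂ) : Eu n → ℂ :=
  fun x => fderiv ℝ f x (EuclideanSpace.single j 1)

/-- multi-index derivative ∂^α -/
def mderiv {n : ℕ} (α : Fin n → ℕ) (f : Eu n → ℂ) : Eu n → ℂ :=
  (List.finRange n).foldr (fun j g => (pd j)^[α j] g) f

def msum {n : ℕ} (α : Fin n → ℕ) : ℕ := ∑ j, α j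

def xmon {n : ℕ} (α : Fin n → ℕ) (x : Eu n) : ℝ := ∏ j, (x j) ^ (α j)

def mfact {n : ℕ} (α : Fin n → ℕ) : ℕ := ∏ j, Nat.factorial (α j)

/-- complex Hermite polynomial h_{ν,α} -/
def hpoly {n : ℕ} (ν : ℂ) (α : Fin n → ℕ) (x : Eu n) : ℂ :=
  ∑ β ∈ Finset.Iic α, if ∀ j, 2 * β j ≤ α j then
    ((-1:ℂ)^(msum β) * (mfact α : ℂ)) / ((mfact β : ℂ) * (mfact (α - 2 • β) : ℂ))
      * ν ^ (-(msum (α - β) : ℤ)) * ((xmon (α - 2 • β) x : ℝ) : ℂ)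
  else 0

/-- multi-indices of total degree k -/
def multiIdx (n k : ℕ) : Finset (Fin n → ℕ) :=
  Finset.filter (fun β => msum β = k) (Finset.Iic (fun _ => k))

/-- moment M_β(φ) -/
def mom {n : ℕ} (β : Fin n → ℕ) (φ : Eu n → ℂ) : ℂ :=
  ((mfact β : ℂ))⁻¹ * ∫ x, ((xmon β x : ℝ) : ℂ) * φ x

/-- asymptotic profile Λ_{α,N}(t;φ) -/
def Lam {n : ℕ} (ν : ℂ) (α : Fin n → ℕ) (N : ℕ) (t : ℝ) (φ : Eu n → ℂ) : Eu n → ℂ :=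
  fun x => (-2:ℂ) ^ (-(msum α : ℤ)) * ((t ^ (-(msum α : ℝ)/2) : ℝ) : ℂ) *
    ∑ k ∈ Finset.range (N+1), (2:ℂ) ^ (-(k:ℤ)) * ((t ^ (-(k:ℝ)/2) : ℝ) : ℂ) *
      ∑ β ∈ multiIdx n k, mom β φ * dil t (fun y => hpoly ν (α+β) y * Gf n ν 1 y) x

/-- weighted L¹ space membership -/
def L1m {n : ℕ} (m : ℕ) (φ : Eu n → ℂ) : Prop :=
  ∀ α : Fin n → ℕ, msum α ≤ m → Integrable (fun x => ((xmon α x : ℝ) : ℂ) * φ x)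

end

noncomputable section

/-- spacetime moment ψ_k of the nonlinearity -/
def psiF {n : ℕ} (f : ℂ → ℂ) (u : ℝ → Eu n → ℂ) (k : ℕ) : Eu n → ℂ :=
  fun x => ∫ s in Set.Ioi (0:ℝ), ((s ^ k : ℝ) : ℂ) * f (u s x)

/-- m-th order asymptotic profile A_m(t) -/
def AAprof {n : ℕ} (ν : ℂ) (f : ℂ → ℂ) (u : ℝ → Eu n → ℂ) (u₀ : Eu n → ℂ)
    (m : ℕ) (t : ℝ) : Eu n → ℂ :=
  fun x => Lam ν 0 m t u₀ x +
    ∑ γ ∈ Finset.Iic (fun _ : Fin n => m),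
      if 2 * msum γ ≤ m then
        (-ν) ^ (msum γ) / (mfact γ : ℂ)
          * Lam ν (2 • γ) (m - 2 * msum γ) t (psiF f u (msum γ)) x
      else 0

end

section StratAux

variable {n : ℕ}

lemma mem_multiIdx {k : ℕ} {β : Fin n → ℕ} : β ∈ multiIdx n k ↔ msum β = k := by
  constructor
  · exact fun h => (Finset.mem_filter.mp h).2
  · intro h
    refine Finset.mem_filter.mpr ⟨Finset.mem_Iic.mpr fun j => ?_, h⟩
    calc β j ≤ msum β := Finset.single_le_sum (fun i _ => Nat.zero_le _) (Finset.mem_univ j)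
    _ = k := h

lemma msum_add (a b : Fin n → ℕ) : msum (a + b) = msum a + msum b := by
  simp [msum, Finset.sum_add_distrib]

lemma msum_two_smul (γ : Fin n → ℕ) : msum (2 • γ) = 2 * msum γ := by
  simp [msum, Finset.mul_sum]

lemma msum_sub {α γ : Fin n → ℕ} (h : ∀ j, γ j ≤ α j) :
    msum (α - γ) = msum α - msum γ := by
  have h1 : (α - γ) + γ = α := by funext j; exact Nat.sub_add_cancel (h j)
  have h2 : msum (α - γ) + msum γ = msum α := by rw [← msum_add, h1]
  omega

lemma dil_one (φ : Eu n → ℂ) : dil 1 φ = φ := by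
  funext x; simp [dil, Real.one_rpow]

lemma Lam_succ_sub (ν : ℂ) (α : Fin n → ℕ) (N : ℕ) (t : ℝ) (φ : Eu n → ℂ) (x : Eu n) :
    Lam ν α (N+1) t φ x - Lam ν α N t φ x
      = (-2:ℂ) ^ (-(msum α : ℤ)) * ((t ^ (-(msum α : ℝ)/2) : ℝ) : ℂ) *
        ((2:ℂ) ^ (-((N+1 : ℕ):ℤ)) * ((t ^ (-((N+1:ℕ):ℝ)/2) : ℝ) : ℂ) *
          ∑ β ∈ multiIdx n (N+1), mom β φ * dil t (fun y => hpoly ν (α+β) y * Gf n ν 1 y) x) := by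
  simp only [Lam, Finset.sum_range_succ]
  ring

lemma coeff_combine {t : ℝ} (ht : 0 < t) {g k : ℕ} (hg : 2 * g ≤ k) :
    ((-2:ℂ) ^ (-((2*g : ℕ) : ℤ)) * ((t ^ (-((2*g : ℕ) : ℝ)/2) : ℝ) : ℂ)) *
      ((2:ℂ) ^ (-((k - 2*g : ℕ) : ℤ)) * ((t ^ (-((k - 2*g : ℕ) : ℝ)/2) : ℝ) : ℂ))
    = (2:ℂ) ^ (-(k:ℤ)) * ((t ^ (-(k:ℝ)/2) : ℝ) : ℂ) := by
  have e1 : ((-2:ℂ)) ^ (-((2*g : ℕ) : ℤ)) = (2:ℂ) ^ (-((2*g : ℕ) : ℤ)) :=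
    Even.neg_zpow ⟨-(g:ℤ), by push_cast; ring⟩ 2
  have e2 : (2:ℂ) ^ (-((2*g : ℕ) : ℤ)) * (2:ℂ) ^ (-((k - 2*g : ℕ) : ℤ)) = (2:ℂ) ^ (-(k:ℤ)) := by
    rw [← zpow_add₀ (two_ne_zero)]
    congr 1
    have : ((k - 2*g : ℕ) : ℤ) = (k : ℤ) - 2*g := by omega
    omega
  have e3 : (t ^ (-((2*g : ℕ) : ℝ)/2)) * (t ^ (-((k - 2*g : ℕ) : ℝ)/2)) = t ^ (-(k:ℝ)/2) := by
    rw [← Real.rpow_add ht]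
    congr 1
    have : ((k - 2*g : ℕ) : ℝ) = (k : ℝ) - 2*g := by
      push_cast [Nat.cast_sub hg]; ring
    rw [this]; push_cast; ring
  calc ((-2:ℂ)) ^ (-((2*g : ℕ) : ℤ)) * ((t ^ (-((2*g : ℕ) : ℝ)/2) : ℝ) : ℂ) *
      ((2:ℂ) ^ (-((k - 2*g : ℕ) : ℤ)) * ((t ^ (-((k - 2*g : ℕ) : ℝ)/2) : ℝ) : ℂ))
      = ((-2:ℂ)) ^ (-((2*g : ℕ) : ℤ)) * (2:ℂ) ^ (-((k - 2*g : ℕ) : ℤ)) *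
        (((t ^ (-((2*g : ℕ) : ℝ)/2) : ℝ) : ℂ) * ((t ^ (-((k - 2*g : ℕ) : ℝ)/2) : ℝ) : ℂ)) := by ring
    _ = (2:ℂ) ^ (-(k:ℤ)) * ((t ^ (-(k:ℝ)/2) : ℝ) : ℂ) := by
        rw [e1, e2, ← Complex.ofReal_mul, e3]

end StratAux


section StratCore

lemma strat_core (n : ℕ) (ν : ℂ) (f : ℂ → ℂ) (u : ℝ → Eu n → ℂ) (u₀ : Eu n → ℂ)
    {t : ℝ} (ht : 0 < t) (k : ℕ) (x : Eu n) :
    AAprof ν f u u₀ k t x - (if k = 0 then 0 else AAprof ν f u u₀ (k-1) t x)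
    = (2:ℂ) ^ (-(k:ℤ)) * ((t ^ (-(k:ℝ)/2) : ℝ) : ℂ) * ∑ α ∈ multiIdx n k,
        (mom α u₀ + ∑ γ ∈ Finset.Iic α,
            if (∀ j, 2 * γ j ≤ α j) ∧ 2 * msum γ ≤ k then
              (-ν) ^ (msum γ) / (mfact γ : ℂ) * mom (α - 2 • γ) (psiF f u (msum γ))
            else 0)
          * dil t (fun y => hpoly ν α y * Gf n ν 1 y) x := by
  cases k with
  | zero =>
    have hm0 : msum (0 : Fin n → ℕ) = 0 := by simp [msum]
    have hf0 : mfact (0 : Fin n → ℕ) = 1 := by simp [mfact]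
    have hI : Finset.Iic (fun _ : Fin n => (0:ℕ)) = {0} := by
      ext γ
      simp only [Finset.mem_Iic, Finset.mem_singleton]
      constructor
      · intro h; funext i; exact Nat.le_zero.mp (h i)
      · rintro rfl; exact le_refl _
    have hI0 : Finset.Iic (0 : Fin n → ℕ) = {0} := hI
    have hM : multiIdx n 0 = {0} := by
      ext β
      simp only [mem_multiIdx, Finset.mem_singleton, msum]
      constructor
      · intro h; funext i
        exact (Finset.sum_eq_zero_iff.mp h) i (Finset.mem_univ i)
      · rintro rfl; simp
    simp only [if_pos rfl, sub_zero, AAprof, Lam, hI, hI0, hM, Finset.sum_singleton,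
      Finset.range_one, hm0, hf0, Nat.cast_zero, Nat.cast_one, neg_zero, zpow_zero,
      zero_div, Real.rpow_zero, Complex.ofReal_one, zero_add, pow_zero, smul_zero,
      tsub_zero, Nat.mul_zero, Nat.le_refl, Pi.zero_apply, mul_zero, Nat.zero_le,
      and_self, if_true, Finset.sum_range_one]
    simp only [implies_true, and_self, if_true]
    ring
  | succ j =>
    simp only [if_neg (Nat.succ_ne_zero j), Nat.add_sub_cancel, AAprof]
    have hsub : Finset.Iic (fun _ : Fin n => j) ⊆ Finset.Iic (fun _ : Fin n => j+1) :=
      Finset.Iic_subset_Iic.mpr (fun i => Nat.le_succ j)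
    have hvan : ∀ γ ∈ Finset.Iic (fun _ : Fin n => j+1), γ ∉ Finset.Iic (fun _ : Fin n => j) →
        (if 2 * msum γ ≤ j+1 then
            (-ν) ^ (msum γ) / (mfact γ : ℂ)
              * Lam ν (2 • γ) (j+1 - 2 * msum γ) t (psiF f u (msum γ)) x
          else 0) = 0 := by
      intro γ _ hγ
      rw [if_neg]
      intro hcond
      apply hγ
      refine Finset.mem_Iic.mpr (Pi.le_def.mpr fun i => ?_)
      have h1 : γ i ≤ msum γ :=
        Finset.single_le_sum (fun i _ => Nat.zero_le _) (Finset.mem_univ i)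
      show γ i ≤ j
      omega
    rw [← Finset.sum_subset hsub hvan]
    -- per-γ difference
    have hper : ∀ γ ∈ Finset.Iic (fun _ : Fin n => j),
        ((if 2 * msum γ ≤ j+1 then
            (-ν) ^ (msum γ) / (mfact γ : ℂ)
              * Lam ν (2 • γ) (j+1 - 2 * msum γ) t (psiF f u (msum γ)) x else 0)
          - (if 2 * msum γ ≤ j then
            (-ν) ^ (msum γ) / (mfact γ : ℂ)
              * Lam ν (2 • γ) (j - 2 * msum γ) t (psiF f u (msum γ)) x else 0))
        = (if 2 * msum γ ≤ j+1 then
            (2:ℂ) ^ (-((j+1:ℕ):ℤ)) * ((t ^ (-((j+1:ℕ):ℝ)/2) : ℝ) : ℂ) *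
              ((-ν) ^ (msum γ) / (mfact γ : ℂ) * ∑ β ∈ multiIdx n (j+1 - 2 * msum γ),
                mom β (psiF f u (msum γ)) *
                  dil t (fun y => hpoly ν (2 • γ + β) y * Gf n ν 1 y) x)
          else 0) := by
      intro γ _
      by_cases hc1 : 2 * msum γ ≤ j
      · have hg : 2 * msum γ ≤ j + 1 := le_trans hc1 (Nat.le_succ j)
        rw [if_pos hc1, if_pos hg, if_pos hg]
        have hN : j + 1 - 2 * msum γ = (j - 2 * msum γ) + 1 := by omega
        rw [hN, ← mul_sub, Lam_succ_sub, ← hN, msum_two_smul]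
        have hco := coeff_combine ht hg
        calc (-ν) ^ (msum γ) / (mfact γ : ℂ) *
              ((-2:ℂ) ^ (-((2 * msum γ : ℕ) : ℤ)) * ((t ^ (-((2 * msum γ : ℕ) : ℝ)/2) : ℝ) : ℂ) *
              ((2:ℂ) ^ (-((j+1 - 2 * msum γ : ℕ):ℤ)) * ((t ^ (-((j+1 - 2 * msum γ:ℕ):ℝ)/2) : ℝ) : ℂ) *
                ∑ β ∈ multiIdx n (j+1 - 2 * msum γ),
                  mom β (psiF f u (msum γ)) * dil t (fun y => hpoly ν (2 • γ + β) y * Gf n ν 1 y) x))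
            = ((-2:ℂ) ^ (-((2 * msum γ : ℕ) : ℤ)) * ((t ^ (-((2 * msum γ : ℕ) : ℝ)/2) : ℝ) : ℂ) *
               ((2:ℂ) ^ (-((j+1 - 2 * msum γ : ℕ):ℤ)) * ((t ^ (-((j+1 - 2 * msum γ:ℕ):ℝ)/2) : ℝ) : ℂ))) *
              ((-ν) ^ (msum γ) / (mfact γ : ℂ) * ∑ β ∈ multiIdx n (j+1 - 2 * msum γ),
                mom β (psiF f u (msum γ)) * dil t (fun y => hpoly ν (2 • γ + β) y * Gf n ν 1 y) x) := by
              ring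
          _ = (2:ℂ) ^ (-((j+1:ℕ):ℤ)) * ((t ^ (-((j+1:ℕ):ℝ)/2) : ℝ) : ℂ) *
              ((-ν) ^ (msum γ) / (mfact γ : ℂ) * ∑ β ∈ multiIdx n (j+1 - 2 * msum γ),
                mom β (psiF f u (msum γ)) *
                  dil t (fun y => hpoly ν (2 • γ + β) y * Gf n ν 1 y) x) := by
              rw [hco]
      · by_cases hg : 2 * msum γ ≤ j + 1
        · rw [if_neg hc1, if_pos hg, if_pos hg, sub_zero]
          have h0 : j + 1 - 2 * msum γ = 0 := by omega
          simp only [Lam, h0, zero_add, Finset.sum_range_one, Nat.cast_zero, neg_zero,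
            zpow_zero, zero_div, Real.rpow_zero, Complex.ofReal_one, one_mul, msum_two_smul]
          have hco := coeff_combine ht hg
          rw [h0] at hco
          simp only [Nat.cast_zero, neg_zero, zpow_zero, zero_div, Real.rpow_zero,
            Complex.ofReal_one, mul_one] at hco
          calc (-ν) ^ (msum γ) / (mfact γ : ℂ) *
                ((-2:ℂ) ^ (-((2 * msum γ : ℕ) : ℤ)) * ((t ^ (-((2 * msum γ : ℕ) : ℝ)/2) : ℝ) : ℂ) *
                ∑ β ∈ multiIdx n 0,
                  mom β (psiF f u (msum γ)) * dil t (fun y => hpoly ν (2 • γ + β) y * Gf n ν 1 y) x)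
              = ((-2:ℂ) ^ (-((2 * msum γ : ℕ) : ℤ)) * ((t ^ (-((2 * msum γ : ℕ) : ℝ)/2) : ℝ) : ℂ)) *
                ((-ν) ^ (msum γ) / (mfact γ : ℂ) * ∑ β ∈ multiIdx n 0,
                  mom β (psiF f u (msum γ)) * dil t (fun y => hpoly ν (2 • γ + β) y * Gf n ν 1 y) x) := by
                ring
            _ = (2:ℂ) ^ (-((j+1:ℕ):ℤ)) * ((t ^ (-((j+1:ℕ):ℝ)/2) : ℝ) : ℂ) *
                ((-ν) ^ (msum γ) / (mfact γ : ℂ) * ∑ β ∈ multiIdx n 0,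
                  mom β (psiF f u (msum γ)) *
                    dil t (fun y => hpoly ν (2 • γ + β) y * Gf n ν 1 y) x) := by
                rw [hco]
        · rw [if_neg hc1, if_neg hg, if_neg hg, sub_zero]
    have hB : (∑ γ ∈ Finset.Iic (fun _ : Fin n => j),
          if 2 * msum γ ≤ j+1 then
            (-ν) ^ (msum γ) / (mfact γ : ℂ)
              * Lam ν (2 • γ) (j+1 - 2 * msum γ) t (psiF f u (msum γ)) x else 0)
        - (∑ γ ∈ Finset.Iic (fun _ : Fin n => j),
          if 2 * msum γ ≤ j then
            (-ν) ^ (msum γ) / (mfact γ : ℂ)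
              * Lam ν (2 • γ) (j - 2 * msum γ) t (psiF f u (msum γ)) x else 0)
        = ∑ γ ∈ Finset.Iic (fun _ : Fin n => j),
            (if 2 * msum γ ≤ j+1 then
              (2:ℂ) ^ (-((j+1:ℕ):ℤ)) * ((t ^ (-((j+1:ℕ):ℝ)/2) : ℝ) : ℂ) *
                ((-ν) ^ (msum γ) / (mfact γ : ℂ) * ∑ β ∈ multiIdx n (j+1 - 2 * msum γ),
                  mom β (psiF f u (msum γ)) *
                    dil t (fun y => hpoly ν (2 • γ + β) y * Gf n ν 1 y) x)
            else 0) := by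
      rw [← Finset.sum_sub_distrib]
      exact Finset.sum_congr rfl hper
    have hA : Lam ν 0 (j+1) t u₀ x - Lam ν 0 j t u₀ x
        = (2:ℂ) ^ (-((j+1:ℕ):ℤ)) * ((t ^ (-((j+1:ℕ):ℝ)/2) : ℝ) : ℂ) *
          ∑ β ∈ multiIdx n (j+1), mom β u₀ *
            dil t (fun y => hpoly ν β y * Gf n ν 1 y) x := by
      rw [Lam_succ_sub]
      have hm0 : msum (0 : Fin n → ℕ) = 0 := by simp [msum]
      simp only [hm0, Nat.cast_zero, neg_zero, zpow_zero, zero_div, Real.rpow_zero,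
        Complex.ofReal_one, one_mul, zero_add]
    have hC : ∑ γ ∈ Finset.Iic (fun _ : Fin n => j),
          (if 2 * msum γ ≤ j+1 then
            (2:ℂ) ^ (-((j+1:ℕ):ℤ)) * ((t ^ (-((j+1:ℕ):ℝ)/2) : ℝ) : ℂ) *
              ((-ν) ^ (msum γ) / (mfact γ : ℂ) * ∑ β ∈ multiIdx n (j+1 - 2 * msum γ),
                mom β (psiF f u (msum γ)) *
                  dil t (fun y => hpoly ν (2 • γ + β) y * Gf n ν 1 y) x)
          else 0)
        = (2:ℂ) ^ (-((j+1:ℕ):ℤ)) * ((t ^ (-((j+1:ℕ):ℝ)/2) : ℝ) : ℂ) *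
          ∑ α ∈ multiIdx n (j+1),
            (∑ γ ∈ Finset.Iic α,
              if (∀ i, 2 * γ i ≤ α i) ∧ 2 * msum γ ≤ j+1 then
                (-ν) ^ (msum γ) / (mfact γ : ℂ) * mom (α - 2 • γ) (psiF f u (msum γ))
              else 0) * dil t (fun y => hpoly ν α y * Gf n ν 1 y) x := by
      rw [← Finset.sum_filter, ← Finset.mul_sum]
      congr 1
      have hrhs : ∀ α ∈ multiIdx n (j+1),
          (∑ γ ∈ Finset.Iic α,
            if (∀ i, 2 * γ i ≤ α i) ∧ 2 * msum γ ≤ j+1 then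
              (-ν) ^ (msum γ) / (mfact γ : ℂ) * mom (α - 2 • γ) (psiF f u (msum γ))
            else 0) * dil t (fun y => hpoly ν α y * Gf n ν 1 y) x
          = ∑ γ ∈ (Finset.Iic α).filter (fun γ => (∀ i, 2 * γ i ≤ α i) ∧ 2 * msum γ ≤ j+1),
              ((-ν) ^ (msum γ) / (mfact γ : ℂ) * mom (α - 2 • γ) (psiF f u (msum γ)))
                * dil t (fun y => hpoly ν α y * Gf n ν 1 y) x := by
        intro α _
        rw [Finset.sum_filter, Finset.sum_mul]
        refine Finset.sum_congr rfl fun γ _ => ?_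
        split <;> simp
      rw [Finset.sum_congr rfl hrhs]
      have hlhs : ∀ γ ∈ (Finset.Iic (fun _ : Fin n => j)).filter (fun γ => 2 * msum γ ≤ j+1),
          (-ν) ^ (msum γ) / (mfact γ : ℂ) * ∑ β ∈ multiIdx n (j+1 - 2 * msum γ),
            mom β (psiF f u (msum γ)) * dil t (fun y => hpoly ν (2 • γ + β) y * Gf n ν 1 y) x
          = ∑ β ∈ multiIdx n (j+1 - 2 * msum γ),
              (-ν) ^ (msum γ) / (mfact γ : ℂ) *
                (mom β (psiF f u (msum γ)) *
                  dil t (fun y => hpoly ν (2 • γ + β) y * Gf n ν 1 y) x) := by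
        intro γ _
        rw [Finset.mul_sum]
      rw [Finset.sum_congr rfl hlhs, Finset.sum_sigma', Finset.sum_sigma']
      refine Finset.sum_nbij' (fun p => ⟨2 • p.1 + p.2, p.1⟩) (fun p => ⟨p.2, p.1 - 2 • p.2⟩)
        ?_ ?_ ?_ ?_ ?_
      · rintro ⟨γ, β⟩ hp
        simp only [Finset.mem_sigma, Finset.mem_filter, Finset.mem_Iic] at hp ⊢
        obtain ⟨⟨hγle, hγk⟩, hβ⟩ := hp
        have hβs := mem_multiIdx.mp hβ
        refine ⟨mem_multiIdx.mpr ?_, Pi.le_def.mpr fun i => ?_, fun i => ?_, hγk⟩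
        · rw [msum_add, msum_two_smul, hβs]; omega
        · show γ i ≤ 2 • γ i + β i
          simp only [smul_eq_mul]; omega
        · show 2 * γ i ≤ 2 • γ i + β i
          simp only [smul_eq_mul]; omega
      · rintro ⟨α, γ⟩ hp
        simp only [Finset.mem_sigma, Finset.mem_filter, Finset.mem_Iic] at hp ⊢
        obtain ⟨hα, hγle, hcond, hγk⟩ := hp
        have hαs := mem_multiIdx.mp hα
        have hle2 : ∀ i, (2 • γ) i ≤ α i := fun i => by
          simpa [smul_eq_mul] using hcond i
        refine ⟨⟨Pi.le_def.mpr fun i => ?_, hγk⟩, mem_multiIdx.mpr ?_⟩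
        · have h1 : γ i ≤ msum γ :=
            Finset.single_le_sum (fun i _ => Nat.zero_le _) (Finset.mem_univ i)
          show γ i ≤ j
          omega
        · rw [msum_sub hle2, msum_two_smul, hαs]
      · rintro ⟨γ, β⟩ hp
        have h : (2 • γ + β) - 2 • γ = β := by
          funext i
          show (2 • γ i + β i) - 2 • γ i = β i
          simp
        simp [h]
      · rintro ⟨α, γ⟩ hp
        simp only [Finset.mem_sigma, Finset.mem_filter, Finset.mem_Iic] at hp
        obtain ⟨hα, hγle, hcond, hγk⟩ := hp
        have h : 2 • γ + (α - 2 • γ) = α := by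
          funext i
          have := hcond i
          show 2 • γ i + (α i - 2 • γ i) = α i
          simp only [smul_eq_mul]
          omega
        exact congrArg (fun δ => Sigma.mk δ γ) h
      · rintro ⟨γ, β⟩ hp
        have h : (2 • γ + β) - 2 • γ = β := by
          funext i
          show (2 • γ i + β i) - 2 • γ i = β i
          simp
        simp only [h]
        ring
    rw [show ∀ a b c d : ℂ, (a+b)-(c+d) = (a-c)+(b-d) from fun a b c d => by ring]
    rw [hA, hB, hC, ← mul_add, ← Finset.sum_add_distrib]
    congr 1
    refine Finset.sum_congr rfl fun α _ => ?_
    exact (add_mul _ _ _).symm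

end StratCore

theorem profile_stratification (n : ℕ) (hn : 0 < n) (ν : ℂ) (hν : 0 < ν.re)
    (m : ℕ) (p K : ℝ) (hK : 0 < K) (hp1 : 1 < p) (hp : 1 + ((m:ℝ)+2)/(n:ℝ) < p)
    (f : ℂ → ℂ) (hf0 : f 0 = 0)
    (hf : ∀ ξ η : ℂ, ‖f ξ - f η‖ ≤ K * (‖ξ‖ ^ (p-1) + ‖η‖ ^ (p-1)) * ‖ξ - η‖)
    (u₀ : Eu n → ℂ) (hu₀ : L1m m u₀) (hu₀top : MeasureTheory.MemLp u₀ ⊤ volume)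
    (u : ℝ → Eu n → ℂ)
    (hmeas : ∀ t, MeasureTheory.AEStronglyMeasurable (u t) volume)
    (hmild : ∀ t : ℝ, 0 < t → ∀ᵐ x ∂volume,
      u t x = cgl n ν t u₀ x + ∫ s in (0:ℝ)..t, cgl n ν (t-s) (fun y => f (u s y)) x)
    (M : ℝ)
    (hdecay : ∀ q : ℝ≥0∞, 1 ≤ q → ∀ t : ℝ, 0 < t →
      ENNReal.ofReal ((1+t) ^ ((n:ℝ)/2 * (1 - 1/q.toReal)))
          * MeasureTheory.eLpNorm (u t) q volume ≤ ENNReal.ofReal M)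
    (t : ℝ) (ht : 0 < t) (k : ℕ) (hk : k ≤ m) :
    (∀ x, AAprof ν f u u₀ k t x - (if k = 0 then 0 else AAprof ν f u u₀ (k-1) t x)
        = ((t ^ (-(k:ℝ)/2) : ℝ) : ℂ)
            * dil t (fun y => AAprof ν f u u₀ k 1 y
                - (if k = 0 then 0 else AAprof ν f u u₀ (k-1) 1 y)) x) ∧
    (∀ x, AAprof ν f u u₀ k 1 x - (if k = 0 then 0 else AAprof ν f u u₀ (k-1) 1 x)
        = (2:ℂ) ^ (-(k:ℤ)) * ∑ α ∈ multiIdx n k,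
            (mom α u₀ + ∑ γ ∈ Finset.Iic α,
                if (∀ j, 2 * γ j ≤ α j) ∧ 2 * msum γ ≤ k then
                  (-ν) ^ (msum γ) / (mfact γ : ℂ) * mom (α - 2 • γ) (psiF f u (msum γ))
                else 0)
              * (hpoly ν α x * Gf n ν 1 x)) := by
  have hone : ∀ y : Eu n, AAprof ν f u u₀ k 1 y - (if k = 0 then 0 else AAprof ν f u u₀ (k-1) 1 y)
      = (2:ℂ) ^ (-(k:ℤ)) * ∑ α ∈ multiIdx n k,
          (mom α u₀ + ∑ γ ∈ Finset.Iic α,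
            if (∀ j, 2 * γ j ≤ α j) ∧ 2 * msum γ ≤ k then
              (-ν) ^ (msum γ) / (mfact γ : ℂ) * mom (α - 2 • γ) (psiF f u (msum γ))
            else 0) * (hpoly ν α y * Gf n ν 1 y) := by
    intro y
    rw [strat_core n ν f u u₀ one_pos k y]
    simp only [Real.one_rpow, Complex.ofReal_one, mul_one, dil_one]
  refine ⟨?_, hone⟩
  intro x
  rw [strat_core n ν f u u₀ ht k x]
  have h1 : (fun y => AAprof ν f u u₀ k 1 y - (if k = 0 then 0 else AAprof ν f u u₀ (k-1) 1 y))
      = fun y => (2:ℂ) ^ (-(k:ℤ)) * ∑ α ∈ multiIdx n k,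
          (mom α u₀ + ∑ γ ∈ Finset.Iic α,
            if (∀ j, 2 * γ j ≤ α j) ∧ 2 * msum γ ≤ k then
              (-ν) ^ (msum γ) / (mfact γ : ℂ) * mom (α - 2 • γ) (psiF f u (msum γ))
            else 0) * (hpoly ν α y * Gf n ν 1 y) := funext hone
  rw [h1]
  simp only [dil, Finset.mul_sum]
  refine Finset.sum_congr rfl fun α _ => ?_
  ring
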